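/- arXiv:1809.00728 — 4 statements merged into one kernel-verified Lean document; each statement's English description precedes it below -/
import Mathlib

section
/- Let z, w ∈ ℂⁿ with 0 < ‖z‖ < ‖w‖/√n, and let λ ∈ ℂⁿ satisfy |λᵢ| = 1 and λᵢ·conj(zᵢ) = |zᵢ| for all i. Then |f_λ(z)| > |f_λ(w)|, where f_λ(x) = (Σᵢ λᵢ·conj(xᵢ))/‖x‖². -/
open scoped BigOperators ComplexConjugate

noncomputable def fLam {n : ℕ} (lam : Fin n → ℂ) (z : EuclideanSpace ℂ (Fin n)) : ℂ :=
  (∑ i, lam i * conj (z i)) / ((∑ i, ‖z i‖ ^ 2 : ℝ) : ℂ)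

/-- If `0 < ‖z‖ < ‖w‖/√n` and `λ` is unimodular with `λᵢ conj(zᵢ) = |zᵢ|`, then
`|f_λ(z)| > |f_λ(w)|`. -/
theorem fLam_compare {n : ℕ} (z w : EuclideanSpace ℂ (Fin n)) (lam : Fin n → ℂ)
    (hz : 0 < ‖z‖) (hzw : ‖z‖ < ‖w‖ / Real.sqrt n)
    (hlam : ∀ i, ‖lam i‖ = 1) (hzlam : ∀ i, lam i * conj (z i) = (‖z i‖ : ℂ)) :
    ‖fLam lam w‖ < ‖fLam lam z‖ := by
  have hq : 0 < ‖w‖ / Real.sqrt n := lt_trans hz hzw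
  have hsn : 0 < Real.sqrt n := by
    by_contra h
    push_neg at h
    have : Real.sqrt n = 0 := le_antisymm h (Real.sqrt_nonneg _)
    rw [this, div_zero] at hq
    exact lt_irrefl 0 hq
  have hw : 0 < ‖w‖ := by
    have := (div_pos_iff.mp hq)
    rcases this with ⟨h1, _⟩ | ⟨_, h2⟩
    · exact h1
    · linarith
  have hzsq : (∑ i, ‖z i‖ ^ 2 : ℝ) = ‖z‖ ^ 2 := by
    rw [EuclideanSpace.norm_eq, Real.sq_sqrt (by positivity)]
  have hwsq : (∑ i, ‖w i‖ ^ 2 : ℝ) = ‖w‖ ^ 2 := by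
    rw [EuclideanSpace.norm_eq, Real.sq_sqrt (by positivity)]
  -- norm of fLam z
  have hznum : ((∑ i, lam i * conj (z i)) : ℂ) = ((∑ i, ‖z i‖ : ℝ) : ℂ) := by
    push_cast
    exact Finset.sum_congr rfl fun i _ => hzlam i
  have hzval : ‖fLam lam z‖ = (∑ i, ‖z i‖) / ‖z‖ ^ 2 := by
    rw [fLam, hznum, norm_div, Complex.norm_real, Complex.norm_real, hzsq,
      Real.norm_of_nonneg (Finset.sum_nonneg fun i _ => norm_nonneg _),
      Real.norm_of_nonneg (by positivity)]
  have hwval : ‖fLam lam w‖ ≤ (∑ i, ‖w i‖) / ‖w‖ ^ 2 := by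
    rw [fLam, norm_div, Complex.norm_real, hwsq, Real.norm_of_nonneg (by positivity)]
    apply div_le_div_of_nonneg_right _ (by positivity)
    · calc ‖∑ i, lam i * conj (w i)‖ ≤ ∑ i, ‖lam i * conj (w i)‖ := norm_sum_le _ _
        _ = ∑ i, ‖w i‖ := by
            refine Finset.sum_congr rfl fun i _ => ?_
            rw [norm_mul, hlam i, one_mul, RCLike.norm_conj]
  -- key scalar estimates
  have hA : ‖z‖ ≤ ∑ i, ‖z i‖ := by
    rw [EuclideanSpace.norm_eq]
    calc Real.sqrt (∑ i, ‖z i‖ ^ 2) ≤ Real.sqrt ((∑ i, ‖z i‖) ^ 2) :=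
          Real.sqrt_le_sqrt (Finset.sum_sq_le_sq_sum_of_nonneg fun i _ => norm_nonneg _)
      _ = ∑ i, ‖z i‖ := Real.sqrt_sq (Finset.sum_nonneg fun i _ => norm_nonneg _)
  have hB : (∑ i, ‖w i‖) ≤ Real.sqrt n * ‖w‖ := by
    have h1 : (∑ i, ‖w i‖) ^ 2 ≤ n * ∑ i, ‖w i‖ ^ 2 := by
      simpa using sq_sum_le_card_mul_sum_sq (s := Finset.univ) (f := fun i => ‖w i‖)
    have := Real.sqrt_le_sqrt h1
    rwa [Real.sqrt_sq (Finset.sum_nonneg fun i _ => norm_nonneg _), hwsq,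
      Real.sqrt_mul (Nat.cast_nonneg n), Real.sqrt_sq (norm_nonneg w)] at this
  calc ‖fLam lam w‖ ≤ (∑ i, ‖w i‖) / ‖w‖ ^ 2 := hwval
    _ ≤ Real.sqrt n * ‖w‖ / ‖w‖ ^ 2 := by
        apply div_le_div_of_nonneg_right hB (by positivity)
    _ = Real.sqrt n / ‖w‖ := by field_simp
    _ < 1 / ‖z‖ := by
        rw [div_lt_div_iff₀ hw hz, one_mul]
        rw [lt_div_iff₀ hsn] at hzw
        linarith [hzw]
    _ = ‖z‖ / ‖z‖ ^ 2 := by field_simp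
    _ ≤ (∑ i, ‖z i‖) / ‖z‖ ^ 2 := div_le_div_of_nonneg_right hA (by positivity)
    _ = ‖fLam lam z‖ := hzval.symm
end

section
/- Every open subset Ω of ℂⁿ is n-holomorphically convex, where the functions f_λ(z - p) = (Σᵢ λᵢ·conj(zᵢ - pᵢ))/‖z - p‖² (for p ∉ Ω, λ unimodular componentwise) are used as separating functions: for every compact K ⊆ Ω, the hull of K with respect to the family 𝒪 consisting of all restrictions to Ω of such functions f_λ(· - p) with p ∈ ∂Ω, together with the coordinate functions zᵢ, is compact. -/
open scoped BigOperators ComplexConjugate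

/-- `f_{λ,p}(z) = (∑ i, λ i * conj (z i - p i)) / ‖z - p‖²` (junk value at `z = p`). -/
noncomputable def fLamP {n : ℕ} (lam : Fin n → ℂ) (p z : EuclideanSpace ℂ (Fin n)) : ℂ :=
  (∑ i, lam i * conj (z i - p i)) / ((‖z - p‖ ^ 2 : ℝ) : ℂ)

/-- The hull of `K` in `Ω` with respect to a family `O` of functions. -/
def hull {n : ℕ} (O : Set (EuclideanSpace ℂ (Fin n) → ℂ))
    (Ω K : Set (EuclideanSpace ℂ (Fin n))) : Set (EuclideanSpace ℂ (Fin n)) :=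
  {z ∈ Ω | ∀ f ∈ O, ‖f z‖ ≤ ⨆ x ∈ K, ‖f x‖}

lemma coord_le_norm {n : ℕ} (x : EuclideanSpace ℂ (Fin n)) (i : Fin n) : ‖x i‖ ≤ ‖x‖ := by
  rw [EuclideanSpace.norm_eq]
  rw [show ‖x i‖ = Real.sqrt (‖x i‖ ^ 2) from (Real.sqrt_sq (norm_nonneg _)).symm]
  exact Real.sqrt_le_sqrt (Finset.single_le_sum (f := fun j => ‖x j‖ ^ 2) (fun j _ => sq_nonneg _) (Finset.mem_univ i))

lemma euclid_norm_le_sum' {n : ℕ} (z p : EuclideanSpace ℂ (Fin n)) :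
    ‖z - p‖ ≤ ∑ i, ‖z i - p i‖ := by
  have h1 : ∑ i, ‖(z-p) i‖ ^ 2 ≤ (∑ i, ‖(z-p) i‖) ^ 2 := by
    rw [sq (∑ i, ‖(z-p) i‖), Finset.sum_mul]
    refine Finset.sum_le_sum fun i _ => ?_
    rw [sq]
    exact mul_le_mul_of_nonneg_left
      (Finset.single_le_sum (fun j _ => norm_nonneg _) (Finset.mem_univ i)) (norm_nonneg _)
  have : ‖z - p‖ ≤ ∑ i, ‖(z - p) i‖ := by
    rw [EuclideanSpace.norm_eq]
    calc Real.sqrt (∑ i, ‖(z-p) i‖ ^ 2) ≤ Real.sqrt ((∑ i, ‖(z-p) i‖) ^ 2) := Real.sqrt_le_sqrt h1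
      _ = ∑ i, ‖(z-p) i‖ := Real.sqrt_sq (Finset.sum_nonneg fun i _ => norm_nonneg _)
  exact this

lemma fLamP_norm_le {n : ℕ} (lam : Fin n → ℂ) (p x : EuclideanSpace ℂ (Fin n))
    (hlam : ∀ i, ‖lam i‖ = 1) (hx : x ≠ p) :
    ‖fLamP lam p x‖ ≤ Real.sqrt n / ‖x - p‖ := by
  have hxp : (0:ℝ) < ‖x - p‖ := by
    rw [norm_pos_iff]; exact sub_ne_zero_of_ne hx
  have hnum : ‖∑ i, lam i * conj (x i - p i)‖ ≤ Real.sqrt n * ‖x - p‖ := by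
    calc ‖∑ i, lam i * conj (x i - p i)‖ ≤ ∑ i, ‖lam i * conj (x i - p i)‖ :=
          norm_sum_le _ _
      _ = ∑ i, ‖(x - p) i‖ := by
          refine Finset.sum_congr rfl fun i _ => ?_
          rw [norm_mul, hlam i, one_mul, RCLike.norm_conj]
          rfl
      _ ≤ Real.sqrt n * ‖x - p‖ := by
          have h := Finset.sum_mul_sq_le_sq_mul_sq Finset.univ (fun _ => (1:ℝ))
            (fun i => ‖(x - p) i‖)
          simp only [one_mul, one_pow, Finset.sum_const, Finset.card_univ, Fintype.card_fin,
            nsmul_eq_mul, mul_one] at h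
          have h2 := Real.sqrt_le_sqrt h
          rw [Real.sqrt_sq (Finset.sum_nonneg fun i _ => norm_nonneg _),
            Real.sqrt_mul (Nat.cast_nonneg n)] at h2
          rwa [EuclideanSpace.norm_eq]
  rw [fLamP, norm_div, Complex.norm_real,
    Real.norm_of_nonneg (by positivity : (0:ℝ) ≤ ‖x - p‖ ^ 2)]
  rw [div_le_div_iff₀ (by positivity) hxp]
  calc ‖∑ i, lam i * conj (x i - p i)‖ * ‖x - p‖ ≤ (Real.sqrt n * ‖x - p‖) * ‖x - p‖ :=
        mul_le_mul_of_nonneg_right hnum (le_of_lt hxp)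
    _ = Real.sqrt n * ‖x - p‖ ^ 2 := by ring

lemma fLamP_lower {n : ℕ} (p z : EuclideanSpace ℂ (Fin n)) (hz : z ≠ p) :
    ∃ lam : Fin n → ℂ, (∀ i, ‖lam i‖ = 1) ∧ 1 / ‖z - p‖ ≤ ‖fLamP lam p z‖ := by
  have hzp : (0:ℝ) < ‖z - p‖ := by rw [norm_pos_iff]; exact sub_ne_zero_of_ne hz
  refine ⟨fun i => if h : z i - p i = 0 then 1 else (z i - p i) / (‖z i - p i‖ : ℂ), ?_, ?_⟩
  · intro i
    by_cases h : z i - p i = 0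
    · simp [h]
    · simp only []
      rw [dif_neg h, norm_div, Complex.norm_real, Real.norm_of_nonneg (norm_nonneg _)]
      exact div_self (norm_ne_zero_iff.mpr h)
  · have key : ∀ i, (if h : z i - p i = 0 then 1 else (z i - p i) / (‖z i - p i‖ : ℂ))
        * conj (z i - p i) = (‖z i - p i‖ : ℂ) := by
      intro i
      by_cases h : z i - p i = 0
      · simp [h]
      · rw [dif_neg h, div_mul_eq_mul_div, Complex.mul_conj]
        rw [Complex.normSq_eq_norm_sq, pow_two]
        push_cast
        rw [mul_div_assoc, div_self, mul_one]
        exact Complex.ofReal_ne_zero.mpr (norm_ne_zero_iff.mpr h)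
    rw [fLamP]
    simp only [key]
    rw [← Complex.ofReal_sum, norm_div, Complex.norm_real, Complex.norm_real,
      Real.norm_of_nonneg (Finset.sum_nonneg fun i _ => norm_nonneg _),
      Real.norm_of_nonneg (by positivity : (0:ℝ) ≤ ‖z - p‖ ^ 2)]
    rw [div_le_div_iff₀ hzp (by positivity)]
    have hsum : ‖z - p‖ ≤ ∑ i, ‖z i - p i‖ := euclid_norm_le_sum' z p
    calc 1 * ‖z - p‖ ^ 2 = ‖z - p‖ * ‖z - p‖ := by ring
      _ ≤ (∑ i, ‖z i - p i‖) * ‖z - p‖ := mul_le_mul_of_nonneg_right hsum (le_of_lt hzp)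

/-- Every open subset of `ℂⁿ` is `n`-holomorphically convex, witnessed by the family of all
functions `f_{λ,p}` with `p ∈ ∂Ω` and `λ` componentwise unimodular, together with the
coordinate functions: the hull of every compact `K ⊆ Ω` with respect to this family is compact. -/
theorem open_subset_n_holomorphically_convex {n : ℕ}
    (Ω : Set (EuclideanSpace ℂ (Fin n))) (hΩ : IsOpen Ω)
    (O : Set (EuclideanSpace ℂ (Fin n) → ℂ))
    (hO : O = {f | ∃ p ∈ frontier Ω, ∃ lam : Fin n → ℂ,
          (∀ i, ‖lam i‖ = 1) ∧ f = fLamP lam p} ∪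
        {f | ∃ i : Fin n, f = fun z => z i}) :
    ∀ K : Set (EuclideanSpace ℂ (Fin n)), IsCompact K → K ⊆ Ω →
      IsCompact (hull O Ω K) := by
  intro K hK hKΩ
  rcases Nat.eq_zero_or_pos n with hn | hn
  · -- degenerate case: the space is a subsingleton
    subst hn
    haveI : Subsingleton (EuclideanSpace ℂ (Fin 0)) :=
      ⟨fun a b => PiLp.ext fun i => i.elim0⟩
    have hsub : hull O Ω K ⊆ {(0 : EuclideanSpace ℂ (Fin 0))} := by
      intro z _
      exact Set.mem_singleton_iff.mpr (Subsingleton.elim z 0)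
    exact ((Set.finite_singleton _).subset hsub).isCompact
  · -- main case
    have hfrontier_not_mem : ∀ p ∈ frontier Ω, p ∉ Ω := by
      intro p hp
      rw [hΩ.frontier_eq] at hp
      exact hp.2
    have hsqrt_pos : (0:ℝ) < Real.sqrt n := Real.sqrt_pos.mpr (by exact_mod_cast hn)
    -- a norm bound on K
    obtain ⟨C, hC0, hC⟩ : ∃ C : ℝ, 0 ≤ C ∧ ∀ x ∈ K, ‖x‖ ≤ C := by
      obtain ⟨C, hC⟩ := hK.isBounded.exists_norm_le
      exact ⟨max C 0, le_max_right _ _, fun x hx => le_trans (hC x hx) (le_max_left _ _)⟩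
    -- a positive distance from K to the complement of Ω
    obtain ⟨δ, hδ0, hδ⟩ := hK.exists_thickening_subset_open hΩ hKΩ
    have hdist : ∀ x ∈ K, ∀ p ∈ frontier Ω, δ ≤ ‖x - p‖ := by
      intro x hx p hp
      by_contra hlt
      push_neg at hlt
      have hmem : p ∈ Metric.thickening δ K := by
        rw [Metric.mem_thickening_iff]
        exact ⟨x, hx, by rw [dist_comm, dist_eq_norm]; exact hlt⟩
      exact hfrontier_not_mem p hp (hδ hmem)
    set ε : ℝ := δ / Real.sqrt n with hε_def
    have hε0 : 0 < ε := div_pos hδ0 hsqrt_pos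
    -- the supremum over K of ‖fLamP lam p ·‖ is at most √n / δ
    have hsup_le : ∀ (p : EuclideanSpace ℂ (Fin n)), p ∈ frontier Ω →
        ∀ (lam : Fin n → ℂ), (∀ i, ‖lam i‖ = 1) →
        (⨆ x ∈ K, ‖fLamP lam p x‖) ≤ Real.sqrt n / δ := by
      intro p hp lam hlam
      have h0 : (0:ℝ) ≤ Real.sqrt n / δ := le_of_lt (div_pos hsqrt_pos hδ0)
      refine Real.iSup_le (fun x => Real.iSup_le (fun hx => ?_) h0) h0
      have hxp : x ≠ p := fun h => hfrontier_not_mem p hp (h ▸ hKΩ hx)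
      calc ‖fLamP lam p x‖ ≤ Real.sqrt n / ‖x - p‖ := fLamP_norm_le lam p x hlam hxp
        _ ≤ Real.sqrt n / δ := by
            gcongr
            exact hdist x hx p hp
    -- points of the hull are ε-far from the frontier
    have hfar : ∀ z ∈ hull O Ω K, ∀ p ∈ frontier Ω, ε ≤ dist z p := by
      intro z hz p hp
      have hzΩ : z ∈ Ω := hz.1
      have hzp : z ≠ p := fun h => hfrontier_not_mem p hp (h ▸ hzΩ)
      have hzp' : (0:ℝ) < ‖z - p‖ := by rw [norm_pos_iff]; exact sub_ne_zero_of_ne hzp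
      obtain ⟨lam, hlam, hlow⟩ := fLamP_lower p z hzp
      have hfO : fLamP lam p ∈ O := by
        rw [hO]; exact Or.inl ⟨p, hp, lam, hlam, rfl⟩
      have h1 : 1 / ‖z - p‖ ≤ Real.sqrt n / δ :=
        le_trans hlow (le_trans (hz.2 _ hfO) (hsup_le p hp lam hlam))
      rw [div_le_div_iff₀ hzp' hδ0] at h1
      rw [dist_eq_norm, hε_def, div_le_iff₀ hsqrt_pos]
      calc δ = 1 * δ := (one_mul δ).symm
        _ ≤ ‖z - p‖ * Real.sqrt n := by rw [one_mul]; linarith [h1]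
    -- points of the hull have norm at most √n * C
    have hbdd : ∀ z ∈ hull O Ω K, ‖z‖ ≤ Real.sqrt n * C := by
      intro z hz
      have hcoord : ∀ i : Fin n, ‖z i‖ ≤ C := by
        intro i
        have hfO : (fun z : EuclideanSpace ℂ (Fin n) => z i) ∈ O := by
          rw [hO]; exact Or.inr ⟨i, rfl⟩
        refine le_trans (hz.2 _ hfO) (Real.iSup_le (fun x => Real.iSup_le (fun hx => ?_) hC0) hC0)
        exact le_trans (coord_le_norm x i) (hC x hx)
      rw [EuclideanSpace.norm_eq]
      have hsum : ∑ i, ‖z i‖ ^ 2 ≤ (n : ℝ) * C ^ 2 := by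
        calc ∑ i, ‖z i‖ ^ 2 ≤ ∑ _i : Fin n, C ^ 2 :=
              Finset.sum_le_sum fun i _ => pow_le_pow_left₀ (norm_nonneg _) (hcoord i) 2
          _ = (n : ℝ) * C ^ 2 := by
              simp [Finset.sum_const, Finset.card_univ, nsmul_eq_mul]
      calc Real.sqrt (∑ i, ‖z i‖ ^ 2) ≤ Real.sqrt ((n : ℝ) * C ^ 2) := Real.sqrt_le_sqrt hsum
        _ = Real.sqrt n * C := by
            rw [Real.sqrt_mul (Nat.cast_nonneg n), Real.sqrt_sq hC0]
    -- the compact "sandwich" set S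
    set S : Set (EuclideanSpace ℂ (Fin n)) :=
      (closure Ω ∩ {z | ‖z‖ ≤ Real.sqrt n * C}) ∩
        ⋂ p ∈ frontier Ω, {z | ε ≤ dist z p} with hS_def
    have hSclosed : IsClosed S := by
      refine (isClosed_closure.inter ?_).inter (isClosed_biInter fun p hp => ?_)
      · exact isClosed_le continuous_norm continuous_const
      · exact isClosed_le continuous_const (Continuous.dist continuous_id continuous_const)
    have hSΩ : S ⊆ Ω := by
      intro z hz
      by_contra hzΩ
      have hzfr : z ∈ frontier Ω := by
        rw [hΩ.frontier_eq]
        exact ⟨hz.1.1, hzΩ⟩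
      have := Set.mem_iInter₂.mp hz.2 z hzfr
      simp only [Set.mem_setOf_eq, dist_self] at this
      linarith
    have hSsub : S ⊆ Metric.closedBall 0 (Real.sqrt n * C) := by
      intro z hz
      rw [Metric.mem_closedBall, dist_zero_right]
      exact hz.1.2
    have hScompact : IsCompact S :=
      (isCompact_closedBall (0 : EuclideanSpace ℂ (Fin n)) (Real.sqrt n * C)).of_isClosed_subset
        hSclosed hSsub
    have hhullS : hull O Ω K ⊆ S := by
      intro z hz
      refine ⟨⟨subset_closure hz.1, hbdd z hz⟩, ?_⟩
      exact Set.mem_biInter fun p hp => hfar z hz p hp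
    -- continuity of the separating functions on S
    have hcont : ∀ f ∈ O, ContinuousOn (fun z => ‖f z‖) S := by
      intro f hf
      rw [hO] at hf
      rcases hf with ⟨p, hp, lam, hlam, rfl⟩ | ⟨i, rfl⟩
      · have hne : ∀ z ∈ S, z ≠ p := by
          intro z hz hzp
          have := Set.mem_iInter₂.mp hz.2 p hp
          simp only [Set.mem_setOf_eq, hzp, dist_self] at this
          linarith
        have hnum : Continuous fun z : EuclideanSpace ℂ (Fin n) =>
            ∑ i, lam i * conj (z i - p i) := by
          refine continuous_finset_sum _ fun i _ => ?_
          exact continuous_const.mul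
            (Complex.continuous_conj.comp ((EuclideanSpace.proj i).continuous.sub continuous_const))
        have hden : Continuous fun z : EuclideanSpace ℂ (Fin n) =>
            ((‖z - p‖ ^ 2 : ℝ) : ℂ) :=
          Complex.continuous_ofReal.comp (((continuous_id.sub continuous_const).norm).pow 2)
        have : ContinuousOn (fLamP lam p) S := by
          refine ContinuousOn.div hnum.continuousOn hden.continuousOn ?_
          intro z hz
          have hzp : z ≠ p := hne z hz
          have : (0:ℝ) < ‖z - p‖ ^ 2 := by
            have : (0:ℝ) < ‖z - p‖ := by rw [norm_pos_iff]; exact sub_ne_zero_of_ne hzp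
            positivity
          exact_mod_cast Complex.ofReal_ne_zero.mpr (ne_of_gt this)
        exact this.norm
      · exact ((EuclideanSpace.proj i).continuous.norm).continuousOn
    -- the hull as an intersection of closed sets
    have hhull_eq : hull O Ω K =
        ⋂ f ∈ O, (S ∩ (fun z => ‖f z‖) ⁻¹' Set.Iic (⨆ x ∈ K, ‖f x‖)) := by
      apply Set.eq_of_subset_of_subset
      · intro z hz
        exact Set.mem_biInter fun f hf => ⟨hhullS hz, hz.2 f hf⟩
      · intro z hz
        have hi0 : (fun z : EuclideanSpace ℂ (Fin n) => z ⟨0, hn⟩) ∈ O := by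
          rw [hO]; exact Or.inr ⟨⟨0, hn⟩, rfl⟩
        have hzS : z ∈ S := (Set.mem_iInter₂.mp hz _ hi0).1
        refine ⟨hSΩ hzS, fun f hf => (Set.mem_iInter₂.mp hz f hf).2⟩
    have hhull_closed : IsClosed (hull O Ω K) := by
      rw [hhull_eq]
      exact isClosed_biInter fun f hf =>
        (hcont f hf).preimage_isClosed_of_isClosed hSclosed isClosed_Iic
    exact hScompact.of_isClosed_subset hhull_closed hhullS
end

section
/- Let Ω ⊆ ℂⁿ be open, p ∈ ∂Ω, K ⊆ Ω compact, and r > 0 with B(p,r) ∩ K = ∅. Then for every z ∈ Ω ∩ B(p, r/√n), there exists λ ∈ ℂⁿ with |λᵢ| = 1 for all i such that |f_{λ,p}(z)| > sup_{x ∈ K} |f_{λ,p}(x)|, where f_{λ,p}(x) = (Σᵢ λᵢ·conj(xᵢ - pᵢ))/‖x - p‖². -/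
open scoped BigOperators ComplexConjugate

lemma euc_norm_le_sum {n : ℕ} (v : EuclideanSpace ℂ (Fin n)) : ‖v‖ ≤ ∑ i, ‖v i‖ := by
  rw [EuclideanSpace.norm_eq]
  have h1 : (∑ i, ‖v i‖ ^ 2) ≤ (∑ i, ‖v i‖) ^ 2 :=
    Finset.sum_sq_le_sq_sum_of_nonneg (fun _ _ => norm_nonneg _)
  calc Real.sqrt (∑ i, ‖v i‖ ^ 2) ≤ Real.sqrt ((∑ i, ‖v i‖) ^ 2) := Real.sqrt_le_sqrt h1
    _ = ∑ i, ‖v i‖ := Real.sqrt_sq (by positivity)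

lemma euc_sum_le_sqrt_mul {n : ℕ} (v : EuclideanSpace ℂ (Fin n)) :
    ∑ i, ‖v i‖ ≤ Real.sqrt n * ‖v‖ := by
  rw [EuclideanSpace.norm_eq]
  have h1 : (∑ i, ‖v i‖) ^ 2 ≤ (n : ℝ) * ∑ i, ‖v i‖ ^ 2 := by
    have := sq_sum_le_card_mul_sum_sq (s := Finset.univ) (f := fun i => ‖v i‖)
    simpa using this
  calc ∑ i, ‖v i‖ = Real.sqrt ((∑ i, ‖v i‖) ^ 2) := (Real.sqrt_sq (by positivity)).symm
    _ ≤ Real.sqrt ((n : ℝ) * ∑ i, ‖v i‖ ^ 2) := Real.sqrt_le_sqrt h1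
    _ = Real.sqrt n * Real.sqrt (∑ i, ‖v i‖ ^ 2) := Real.sqrt_mul (by positivity) _

/-- If `B(p,r) ∩ K = ∅` with `p ∈ ∂Ω`, then every `z ∈ Ω ∩ B(p, r/√n)` is separated from `K`
by some `f_{λ,p}` with unimodular `λ`. -/
theorem exists_separating_fLamP {n : ℕ}
    (Ω : Set (EuclideanSpace ℂ (Fin n))) (hΩ : IsOpen Ω)
    (p : EuclideanSpace ℂ (Fin n)) (hp : p ∈ frontier Ω)
    (K : Set (EuclideanSpace ℂ (Fin n))) (hK : IsCompact K) (hKΩ : K ⊆ Ω)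
    (r : ℝ) (hr : 0 < r) (hrK : Metric.ball p r ∩ K = ∅) :
    ∀ z ∈ Ω ∩ Metric.ball p (r / Real.sqrt n),
      ∃ lam : Fin n → ℂ, (∀ i, ‖lam i‖ = 1) ∧
        (⨆ x ∈ K, ‖fLamP lam p x‖) < ‖fLamP lam p z‖ := by
  intro z hz
  obtain ⟨hzΩ, hzball⟩ := hz
  have hpΩ : p ∉ Ω := by
    intro h
    exact hp.2 (by rwa [hΩ.interior_eq])
  have hzp : z ≠ p := fun h => hpΩ (h ▸ hzΩ)
  have hD : 0 < ‖z - p‖ := by rwa [norm_pos_iff, sub_ne_zero]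
  set D := ‖z - p‖ with hDdef
  have hDlt : D < r / Real.sqrt n := by
    rw [← dist_eq_norm] at hDdef
    rw [hDdef]; exact Metric.mem_ball.mp hzball
  have hsq : 0 < Real.sqrt n := by
    by_contra h
    push_neg at h
    have : Real.sqrt n = 0 := le_antisymm h (Real.sqrt_nonneg _)
    rw [this, div_zero] at hDlt
    exact absurd hDlt (not_lt.mpr hD.le)
  -- choose lambda
  set lam : Fin n → ℂ := fun i => if h : z i = p i then 1 else (z i - p i) / ((‖z i - p i‖ : ℝ) : ℂ)
    with hlam
  have hlam1 : ∀ i, ‖lam i‖ = 1 := by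
    intro i
    by_cases h : z i = p i
    · simp [hlam, h]
    · have hne : z i - p i ≠ 0 := sub_ne_zero.mpr h
      simp [hlam, h, norm_div, div_self (norm_ne_zero_iff.mpr hne)]
  refine ⟨lam, hlam1, ?_⟩
  -- value at z
  have hsumz : (∑ i, lam i * conj (z i - p i)) = ((∑ i, ‖z i - p i‖ : ℝ) : ℂ) := by
    push_cast
    refine Finset.sum_congr rfl fun i _ => ?_
    by_cases h : z i = p i
    · simp [hlam, h]
    · have hne : z i - p i ≠ 0 := sub_ne_zero.mpr h
      have hnn : ((‖z i - p i‖ : ℝ) : ℂ) ≠ 0 := by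
        exact_mod_cast Complex.ofReal_ne_zero.mpr (norm_ne_zero_iff.mpr hne)
      rw [hlam]
      simp only [h, dif_neg, not_false_iff]
      rw [div_mul_eq_mul_div, Complex.mul_conj]
      rw [Complex.normSq_eq_norm_sq]
      rw [div_eq_iff hnn]
      push_cast
      ring
  have hcoord : ∀ (x : EuclideanSpace ℂ (Fin n)) (i : Fin n), (x - p) i = x i - p i :=
    fun x i => rfl
  have hfz : ‖fLamP lam p z‖ = (∑ i, ‖z i - p i‖) / D ^ 2 := by
    rw [fLamP, hsumz, norm_div]
    congr 1
    · rw [Complex.norm_real, Real.norm_of_nonneg (Finset.sum_nonneg fun i _ => norm_nonneg _)]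
    · rw [Complex.norm_real, Real.norm_of_nonneg (by positivity)]
  have hzlow : 1 / D ≤ ‖fLamP lam p z‖ := by
    rw [hfz]
    have h1 : D ≤ ∑ i, ‖z i - p i‖ := by
      have := euc_norm_le_sum (z - p)
      simpa [hcoord] using this
    rw [div_le_div_iff₀ hD (by positivity)]
    calc 1 * D ^ 2 = D * D := by ring
      _ ≤ (∑ i, ‖z i - p i‖) * D ^ 2 / D := by
          rw [le_div_iff₀ hD]
          calc D * D * D = D * D ^ 2 := by ring
            _ ≤ (∑ i, ‖z i - p i‖) * D ^ 2 := by
                exact mul_le_mul_of_nonneg_right h1 (by positivity)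
      _ = (∑ i, ‖z i - p i‖) * D := by field_simp
  -- bound on K
  have hKbound : ∀ x ∈ K, ‖fLamP lam p x‖ ≤ Real.sqrt n / r := by
    intro x hx
    have hxr : r ≤ ‖x - p‖ := by
      by_contra h
      push_neg at h
      have : x ∈ Metric.ball p r ∩ K := ⟨by rwa [Metric.mem_ball, dist_eq_norm], hx⟩
      rw [hrK] at this
      exact this
    have hxp : 0 < ‖x - p‖ := lt_of_lt_of_le hr hxr
    have hnum : ‖∑ i, lam i * conj (x i - p i)‖ ≤ Real.sqrt n * ‖x - p‖ := by
      calc ‖∑ i, lam i * conj (x i - p i)‖ ≤ ∑ i, ‖lam i * conj (x i - p i)‖ :=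
            norm_sum_le _ _
        _ = ∑ i, ‖x i - p i‖ := by
            refine Finset.sum_congr rfl fun i _ => ?_
            rw [norm_mul, hlam1 i, one_mul, RCLike.norm_conj]
        _ ≤ Real.sqrt n * ‖x - p‖ := by
            have := euc_sum_le_sqrt_mul (x - p)
            simpa [hcoord] using this
    have hden : ‖(((‖x - p‖ ^ 2 : ℝ)) : ℂ)‖ = ‖x - p‖ ^ 2 := by
      rw [Complex.norm_real, Real.norm_of_nonneg (by positivity)]
    rw [fLamP, norm_div, hden]
    rw [div_le_div_iff₀ (by positivity) hr]
    calc ‖∑ i, lam i * conj (x i - p i)‖ * r ≤ (Real.sqrt n * ‖x - p‖) * r :=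
          mul_le_mul_of_nonneg_right hnum hr.le
      _ ≤ Real.sqrt n * ‖x - p‖ ^ 2 := by
          rw [pow_two, ← mul_assoc]
          exact mul_le_mul_of_nonneg_left hxr (by positivity)
  have hsupK : (⨆ x ∈ K, ‖fLamP lam p x‖) ≤ Real.sqrt n / r := by
    refine Real.iSup_le (fun x => Real.iSup_le (fun hx => hKbound x hx) (by positivity)) (by positivity)
  have hstrict : Real.sqrt n / r < 1 / D := by
    rw [div_lt_div_iff₀ hr hD]
    have : D * Real.sqrt n < r := by
      rw [← lt_div_iff₀ hsq]; exact hDlt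
    linarith [this]
  calc (⨆ x ∈ K, ‖fLamP lam p x‖) ≤ Real.sqrt n / r := hsupK
    _ < 1 / D := hstrict
    _ ≤ ‖fLamP lam p z‖ := hzlow
end

section
/- Let Ω ⊆ ℂⁿ be a bounded open set and 𝒪 a family of continuous functions on Ω containing the coordinate functions z ↦ zᵢ. Suppose for each p ∈ ∂Ω and each neighborhood V of p there exists f ∈ 𝒪, continuous on the closure of Ω, with f(p) = 1 and |f| < 1 on cl(Ω) \ V. Then for every compact K ⊆ Ω, the hull K̂ = {z ∈ Ω : |g(z)| ≤ max_K|g| for all g ∈ 𝒪} is compact. -/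
open scoped BigOperators

/-- If `Ω` is bounded open, `O` contains the coordinate functions, and for each boundary point
`p` and each neighborhood `V` of `p` there is an almost-peak function in `O`, then the hull of
every compact `K ⊆ Ω` is compact. -/
theorem hull_compact_of_peak_functions {n : ℕ}
    (Ω : Set (EuclideanSpace ℂ (Fin n))) (hΩ : IsOpen Ω) (hΩbdd : Bornology.IsBounded Ω)
    (O : Set (EuclideanSpace ℂ (Fin n) → ℂ)) (hO : ∀ f ∈ O, ContinuousOn f Ω)
    (hcoord : ∀ i : Fin n, (fun z : EuclideanSpace ℂ (Fin n) => z i) ∈ O)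
    (hpeak : ∀ p ∈ frontier Ω, ∀ V ∈ nhds p, ∃ f ∈ O, ContinuousOn f (closure Ω) ∧
      f p = 1 ∧ ∀ z ∈ closure Ω \ V, ‖f z‖ < 1) :
    ∀ K : Set (EuclideanSpace ℂ (Fin n)), IsCompact K → K ⊆ Ω →
      IsCompact (hull O Ω K) := by
  intro K hK hKΩ
  set H := hull O Ω K with hH
  have hHΩ : H ⊆ Ω := fun z hz => hz.1
  have hbdd : Bornology.IsBounded H := hΩbdd.subset hHΩ
  -- It suffices to show H is closed
  have hclosed : IsClosed H := by
    rw [← closure_subset_iff_isClosed]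
    intro z hz
    have hne : (nhdsWithin z H).NeBot := mem_closure_iff_nhdsWithin_neBot.mp hz
    have hzcl : z ∈ closure Ω := closure_mono hHΩ hz
    rcases (em (z ∈ Ω)) with hzΩ | hzΩ
    · refine ⟨hzΩ, fun f hf => ?_⟩
      have hcw : ContinuousWithinAt (fun w => ‖f w‖) H z :=
        (((hO f hf) z hzΩ).mono hHΩ).norm
      refine le_of_tendsto hcw ?_
      filter_upwards [self_mem_nhdsWithin] with w hw
      exact hw.2 f hf
    · exfalso
      have hzfr : z ∈ frontier Ω := by
        rw [frontier_eq_closure_inter_closure]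
        exact ⟨hzcl, subset_closure hzΩ⟩
      have hVmem : Kᶜ ∈ nhds z := by
        refine hK.isClosed.isOpen_compl.mem_nhds ?_
        intro hzK
        exact hzΩ (hKΩ hzK)
      obtain ⟨f, hfO, hfc, hfp, hflt⟩ := hpeak z hzfr Kᶜ hVmem
      have hKlt : ∀ x ∈ K, ‖f x‖ < 1 := by
        intro x hx
        exact hflt x ⟨subset_closure (hKΩ hx), fun h => h hx⟩
      -- the sup over K is < 1
      have hsup : (⨆ x ∈ K, ‖f x‖) < 1 := by
        rcases K.eq_empty_or_nonempty with rfl | hKne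
        · simp
        · obtain ⟨x0, hx0, hx0max⟩ :=
            hK.exists_isMaxOn hKne
              (((hfc.mono (fun x hx => subset_closure (hKΩ hx))).norm))
          calc (⨆ x ∈ K, ‖f x‖) ≤ ‖f x0‖ := by
                refine Real.iSup_le (fun x => Real.iSup_le (fun hx => hx0max hx) ?_) (norm_nonneg _)
                exact norm_nonneg _
            _ < 1 := hKlt x0 hx0
      set m := ⨆ x ∈ K, ‖f x‖ with hm
      -- f is continuous within closure Ω at z, f z = 1
      have hcw : ContinuousWithinAt (fun w => ‖f w‖) (closure Ω) z :=
        ((hfc z hzcl)).norm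
      have h1 : Filter.Tendsto (fun w => ‖f w‖) (nhdsWithin z (closure Ω)) (nhds 1) := by
        have : ‖f z‖ = 1 := by rw [hfp]; simp
        rw [← this]; exact hcw
      have hev : ∀ᶠ w in nhdsWithin z (closure Ω), m < ‖f w‖ :=
        h1.eventually (eventually_gt_nhds hsup)
      have hev' : ∀ᶠ w in nhdsWithin z H, m < ‖f w‖ :=
        hev.filter_mono (nhdsWithin_mono z (hHΩ.trans subset_closure))
      have hev2 : ∀ᶠ w in nhdsWithin z H, ‖f w‖ ≤ m := by
        filter_upwards [self_mem_nhdsWithin] with w hw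
        exact hw.2 f hfO
      obtain ⟨w, hw1, hw2⟩ := (hev'.and hev2).exists
      exact absurd hw2 (not_le.mpr hw1)
  exact Metric.isCompact_of_isClosed_isBounded hclosed hbdd
end
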